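/- arXiv:2211.03322 — 3 statements merged into one kernel-verified Lean document; each statement's English description precedes it below -/
import Mathlib

section
/- Let G be a simple graph and let V = V_1 ⊔ V_2 ⊔ … ⊔ V_k be a partition of its vertex set, and set G_i = G[V_i] for 1 ≤ i ≤ k. Then Σ_{i=1}^k (pcr(G_i) + bds(G_i)) ≤ pcr(G) + bds(G). -/
open scoped BigOperators

/-- A drawing of a simple graph in the plane: vertices are distinct points, each edge is a
simple continuous curve joining its endpoints, not passing through any other vertex point;
two distinct edge curves share only finitely many points, and no three edge curves pass
through a common interior point. -/
structure Drawing {V : Type*} (G : SimpleGraph V) where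
  pos : V → ℝ × ℝ
  pos_inj : Function.Injective pos
  curve : G.edgeSet → ℝ → ℝ × ℝ
  curve_cont : ∀ e, ContinuousOn (curve e) (Set.Icc 0 1)
  curve_inj : ∀ e, Set.InjOn (curve e) (Set.Icc 0 1)
  curve_ends : ∀ e : G.edgeSet, ∃ u v : V, (e : Sym2 V) = s(u, v) ∧
    curve e 0 = pos u ∧ curve e 1 = pos v
  curve_avoid : ∀ (e : G.edgeSet), ∀ t ∈ Set.Ioo (0:ℝ) 1, curve e t ∉ Set.range pos
  curve_finite_inter : ∀ e f : G.edgeSet, e ≠ f →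
    (curve e '' Set.Icc 0 1 ∩ curve f '' Set.Icc 0 1).Finite
  no_triple_point : ∀ e f g : G.edgeSet, e ≠ f → f ≠ g → e ≠ g → ∀ p : ℝ × ℝ,
    ¬ (p ∈ curve e '' Set.Ioo 0 1 ∧ p ∈ curve f '' Set.Ioo 0 1 ∧ p ∈ curve g '' Set.Ioo 0 1)

namespace Drawing

variable {V : Type*} {G : SimpleGraph V} (D : Drawing G)

/-- `p` is a crossing point of the edges `e` and `f`: a common interior point of their curves. -/
def IsCross (e f : G.edgeSet) (p : ℝ × ℝ) : Prop :=
  p ∈ D.curve e '' Set.Ioo 0 1 ∧ p ∈ D.curve f '' Set.Ioo 0 1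

/-- The set of crossings of a drawing, recorded as (unordered pair of edges, crossing point). -/
def crossings : Set (Sym2 G.edgeSet × (ℝ × ℝ)) :=
  { x | ∃ e f : G.edgeSet, e ≠ f ∧ x.1 = s(e, f) ∧ D.IsCross e f x.2 }

/-- The number of crossings of a drawing. -/
noncomputable def numCrossings : ℕ := D.crossings.ncard

/-- The set of unordered pairs of distinct edges that cross each other. -/
def crossingPairs : Set (Sym2 G.edgeSet) :=
  { q | ∃ e f : G.edgeSet, e ≠ f ∧ q = s(e, f) ∧ ∃ p, D.IsCross e f p }

/-- The number of pairs of edges that cross each other. -/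
noncomputable def numCrossingPairs : ℕ := D.crossingPairs.ncard

/-- An edge participating in at least one crossing. -/
def CrossingEdge (e : G.edgeSet) : Prop :=
  ∃ f : G.edgeSet, e ≠ f ∧ ∃ p, D.IsCross e f p

/-- A drawing is straight-line if every edge is the line segment between its endpoints. -/
def IsStraightLine : Prop :=
  ∀ (e : G.edgeSet), ∀ t ∈ Set.Icc (0:ℝ) 1,
    D.curve e t = D.curve e 0 + t • (D.curve e 1 - D.curve e 0)

/-- A convex drawing: the vertices are in convex position and edges are straight segments. -/
def IsConvex : Prop :=
  ConvexIndependent ℝ D.pos ∧ D.IsStraightLine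

end Drawing

/-- The crossing number of a graph. -/
noncomputable def crNum {V : Type*} (G : SimpleGraph V) : ℕ :=
  sInf { n | ∃ D : Drawing G, D.numCrossings = n }

/-- The pair crossing number of a graph. -/
noncomputable def pcrNum {V : Type*} (G : SimpleGraph V) : ℕ :=
  sInf { n | ∃ D : Drawing G, D.numCrossingPairs = n }

/-- The sum of the squares of the degrees of a graph. -/
noncomputable def ssqd {V : Type*} (G : SimpleGraph V) : ℕ :=
  ∑ᶠ v : V, ((G.neighborSet v).ncard) ^ 2

/-- The sum over all vertices of (degree choose 2). -/
noncomputable def bds {V : Type*} (G : SimpleGraph V) : ℕ :=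
  ∑ᶠ v : V, ((G.neighborSet v).ncard).choose 2


section Geo

lemma seg_coords {P Q p : ℝ × ℝ} (h : p ∈ segment ℝ P Q) :
    ∃ θ : ℝ, 0 ≤ θ ∧ θ ≤ 1 ∧ p.1 = P.1 + θ * (Q.1 - P.1) ∧ p.2 = P.2 + θ * (Q.2 - P.2) := by
  rw [segment_eq_image'] at h
  obtain ⟨θ, hθ, rfl⟩ := h
  exact ⟨θ, hθ.1, hθ.2, by simp [smul_eq_mul], by simp [smul_eq_mul]⟩

lemma seg_subsingleton {P Q R S : ℝ × ℝ}
    (h : (Q.1 - P.1) * (S.2 - R.2) - (Q.2 - P.2) * (S.1 - R.1) ≠ 0) :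
    (segment ℝ P Q ∩ segment ℝ R S).Subsingleton := by
  rintro p ⟨hp1, hp2⟩ q ⟨hq1, hq2⟩
  obtain ⟨a, _, _, ha1, ha2⟩ := seg_coords hp1
  obtain ⟨b, _, _, hb1, hb2⟩ := seg_coords hp2
  obtain ⟨c, _, _, hc1, hc2⟩ := seg_coords hq1
  obtain ⟨d, _, _, hd1, hd2⟩ := seg_coords hq2
  have key : a = c := by
    have e1 : (a - c) * (Q.1 - P.1) = (b - d) * (S.1 - R.1) := by
      linear_combination hc1 - ha1 + hb1 - hd1
    have e2 : (a - c) * (Q.2 - P.2) = (b - d) * (S.2 - R.2) := by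
      linear_combination hc2 - ha2 + hb2 - hd2
    have : (a - c) * ((Q.1 - P.1) * (S.2 - R.2) - (Q.2 - P.2) * (S.1 - R.1)) = 0 := by
      linear_combination (S.2 - R.2) * e1 - (S.1 - R.1) * e2
    rcases mul_eq_zero.mp this with h' | h'
    · linarith
    · exact absurd h' h
  exact Prod.ext (by rw [ha1, hc1, key]) (by rw [ha2, hc2, key])


end Geo

section Construction

variable {n : ℕ} (G : SimpleGraph (Fin n))

namespace DrawCon

noncomputable def enc : G.edgeSet → ℕ := (Countable.exists_injective_nat G.edgeSet).choose

lemma enc_inj : Function.Injective (enc G) :=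
  (Countable.exists_injective_nat G.edgeSet).choose_spec

noncomputable def hts (e : G.edgeSet) : ℝ := (enc G e : ℝ) + 1

lemma hts_pos (e : G.edgeSet) : 0 < hts G e := by
  unfold hts; positivity

lemma hts_inj {e f : G.edgeSet} (h : e ≠ f) : hts G e ≠ hts G f := by
  unfold hts
  intro hc
  exact h (enc_inj G (by exact_mod_cast (by linarith : (enc G e : ℝ) = enc G f)))

noncomputable def va (e : G.edgeSet) : Fin n := min e.val.out.1 e.val.out.2
noncomputable def vb (e : G.edgeSet) : Fin n := max e.val.out.1 e.val.out.2

lemma edge_eq (e : G.edgeSet) : s(va G e, vb G e) = e.val := by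
  unfold va vb
  have h : s(e.val.out.1, e.val.out.2) = e.val := by rw [Sym2.mk, Quot.out_eq]
  rcases le_total e.val.out.1 e.val.out.2 with hle | hle
  · rwa [min_eq_left hle, max_eq_right hle]
  · rw [min_eq_right hle, max_eq_left hle, Sym2.eq_swap]; exact h

lemma adj (e : G.edgeSet) : G.Adj (va G e) (vb G e) := by
  have h := e.property
  rw [← edge_eq G e, SimpleGraph.mem_edgeSet] at h
  exact h

lemma va_lt_vb (e : G.edgeSet) : va G e < vb G e :=
  lt_of_le_of_ne (by unfold va vb; exact min_le_max) (G.ne_of_adj (adj G e))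

noncomputable def xa (e : G.edgeSet) : ℝ := ((va G e : ℕ) : ℝ)
noncomputable def xb (e : G.edgeSet) : ℝ := ((vb G e : ℕ) : ℝ)

lemma xab (e : G.edgeSet) : xa G e + 1 ≤ xb G e := by
  unfold xa xb
  have := va_lt_vb G e
  have h : (va G e : ℕ) + 1 ≤ (vb G e : ℕ) := this
  exact_mod_cast h

noncomputable def Ap (e : G.edgeSet) : ℝ × ℝ := (xa G e, 0)
noncomputable def Bp (e : G.edgeSet) : ℝ × ℝ := (xa G e + 1/4, hts G e)
noncomputable def Cp (e : G.edgeSet) : ℝ × ℝ := (xb G e - 1/4, hts G e)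
noncomputable def Dp (e : G.edgeSet) : ℝ × ℝ := (xb G e, 0)

noncomputable def segL (e : G.edgeSet) : Set (ℝ × ℝ) := segment ℝ (Ap G e) (Bp G e)
noncomputable def segH (e : G.edgeSet) : Set (ℝ × ℝ) := segment ℝ (Bp G e) (Cp G e)
noncomputable def segR (e : G.edgeSet) : Set (ℝ × ℝ) := segment ℝ (Cp G e) (Dp G e)

noncomputable def crv (e : G.edgeSet) (t : ℝ) : ℝ × ℝ :=
  (if t ≤ 1/3 then xa G e + 3*t*(1/4)
    else if t ≤ 2/3 then (xa G e + 1/4) + (3*t-1)*(xb G e - xa G e - 1/2)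
    else (xb G e - 1/4) + (3*t-2)*(1/4),
   if t ≤ 1/3 then 3*t*(hts G e)
    else if t ≤ 2/3 then hts G e
    else (3-3*t)*(hts G e))

lemma crv_cont (e : G.edgeSet) : Continuous (crv G e) := by
  unfold crv
  apply Continuous.prodMk
  · apply Continuous.if_le
    · fun_prop
    · apply Continuous.if_le
      · fun_prop
      · fun_prop
      · fun_prop
      · fun_prop
      · intro x hx
        rw [hx]; norm_num; try ring
    · fun_prop
    · fun_prop
    · intro x hx
      rw [hx]
      norm_num
      try ring
  · apply Continuous.if_le
    · fun_prop
    · apply Continuous.if_le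
      · fun_prop
      · fun_prop
      · fun_prop
      · fun_prop
      · intro x hx
        rw [hx]; norm_num; try ring
    · fun_prop
    · fun_prop
    · intro x hx
      rw [hx]
      norm_num
      try ring

lemma crv_x_mono (e : G.edgeSet) : StrictMonoOn (fun t => (crv G e t).1) (Set.Icc 0 1) := by
  intro t ht s hs hts
  have hab := xab G e
  simp only [crv]
  have h1 : (0:ℝ) < s - t := by linarith
  have h2 : (0:ℝ) ≤ xb G e - xa G e - 1 := by linarith
  split_ifs <;> nlinarith [mul_nonneg h1.le h2, mul_nonneg (by linarith [ht.1] : (0:ℝ) ≤ 3*t) h2,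
    mul_nonneg (by linarith [hs.2] : (0:ℝ) ≤ 3 - 3*s) h2,
    mul_nonneg (by linarith [hs.1] : (0:ℝ) ≤ 3*s) h2,
    mul_nonneg (by linarith [ht.2] : (0:ℝ) ≤ 3 - 3*t) h2]

lemma crv_inj (e : G.edgeSet) : Set.InjOn (crv G e) (Set.Icc 0 1) := by
  intro t ht s hs h
  exact (crv_x_mono G e).injOn ht hs (congrArg Prod.fst h)

lemma crv_y_pos (e : G.edgeSet) {t : ℝ} (ht : t ∈ Set.Ioo (0:ℝ) 1) : 0 < (crv G e t).2 := by
  have hp := hts_pos G e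
  simp only [crv]
  obtain ⟨h0, h1⟩ := ht
  split_ifs <;> nlinarith

lemma crv_in_segs (e : G.edgeSet) {t : ℝ} (ht : t ∈ Set.Icc (0:ℝ) 1) :
    crv G e t ∈ segL G e ∪ segH G e ∪ segR G e := by
  obtain ⟨h0, h1⟩ := ht
  by_cases hc1 : t ≤ 1/3
  · left; left
    rw [segL, segment_eq_image']
    refine ⟨3*t, ⟨by linarith, by linarith⟩, ?_⟩
    simp only [crv, Ap, Bp, if_pos hc1, Prod.mk_add_mk, Prod.smul_mk, smul_eq_mul, Prod.mk.injEq,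
      Prod.neg_mk, Prod.fst_add, Prod.snd_add, Prod.smul_fst, Prod.smul_snd, Prod.mk_sub_mk, Prod.fst_sub, Prod.snd_sub, Prod.ext_iff]
    constructor <;> ring
  · by_cases hc2 : t ≤ 2/3
    · left; right
      rw [segH, segment_eq_image']
      refine ⟨3*t - 1, ⟨by linarith, by linarith⟩, ?_⟩
      simp only [crv, Bp, Cp, if_neg hc1, if_pos hc2, Prod.mk_add_mk, Prod.smul_mk, smul_eq_mul,
        Prod.neg_mk, Prod.fst_add, Prod.snd_add, Prod.smul_fst, Prod.smul_snd, Prod.mk_sub_mk, Prod.fst_sub, Prod.snd_sub, Prod.ext_iff]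
      constructor <;> ring
    · right
      rw [segR, segment_eq_image']
      refine ⟨3*t - 2, ⟨by linarith, by linarith⟩, ?_⟩
      simp only [crv, Cp, Dp, if_neg hc1, if_neg hc2, Prod.mk_add_mk, Prod.smul_mk, smul_eq_mul,
        Prod.neg_mk, Prod.fst_add, Prod.snd_add, Prod.smul_fst, Prod.smul_snd, Prod.mk_sub_mk, Prod.fst_sub, Prod.snd_sub, Prod.ext_iff]
      constructor <;> ring

lemma segH_y {e : G.edgeSet} {p : ℝ × ℝ} (hp : p ∈ segH G e) : p.2 = hts G e := by
  obtain ⟨θ, -, -, -, h2⟩ := seg_coords hp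
  rw [h2]; simp only [Bp, Cp]; ring

lemma segL_x {e : G.edgeSet} {p : ℝ × ℝ} (hp : p ∈ segL G e) :
    xa G e ≤ p.1 ∧ p.1 ≤ xa G e + 1/4 := by
  obtain ⟨θ, h0, h1, hx, -⟩ := seg_coords hp
  rw [hx]; simp only [Ap, Bp]
  constructor <;> nlinarith

lemma segR_x {e : G.edgeSet} {p : ℝ × ℝ} (hp : p ∈ segR G e) :
    xb G e - 1/4 ≤ p.1 ∧ p.1 ≤ xb G e := by
  obtain ⟨θ, h0, h1, hx, -⟩ := seg_coords hp
  rw [hx]; simp only [Cp, Dp]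
  constructor <;> nlinarith

lemma xsep {x y : Fin n} (h : x ≠ y) :
    ((x : ℕ) : ℝ) + 1 ≤ ((y : ℕ) : ℝ) ∨ ((y : ℕ) : ℝ) + 1 ≤ ((x : ℕ) : ℝ) := by
  rcases lt_or_gt_of_ne h with h' | h'
  · left; exact_mod_cast Nat.succ_le_of_lt h'
  · right; exact_mod_cast Nat.succ_le_of_lt h'

lemma ss_LL {e f : G.edgeSet} (hef : e ≠ f) : (segL G e ∩ segL G f).Subsingleton := by
  apply seg_subsingleton
  intro hc
  exact hts_inj G hef (by simp only [Ap, Bp] at hc; linear_combination (-4 : ℝ) * hc)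

lemma ss_RR {e f : G.edgeSet} (hef : e ≠ f) : (segR G e ∩ segR G f).Subsingleton := by
  apply seg_subsingleton
  intro hc
  exact hts_inj G hef (by simp only [Cp, Dp] at hc; linear_combination (4 : ℝ) * hc)

lemma ss_LR (e f : G.edgeSet) : (segL G e ∩ segR G f).Subsingleton := by
  apply seg_subsingleton
  intro hc
  simp only [Ap, Bp, Cp, Dp] at hc
  nlinarith [hts_pos G e, hts_pos G f]

lemma ss_RL (e f : G.edgeSet) : (segR G e ∩ segL G f).Subsingleton := by
  apply seg_subsingleton
  intro hc
  simp only [Ap, Bp, Cp, Dp] at hc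
  nlinarith [hts_pos G e, hts_pos G f]

lemma ss_LH (e f : G.edgeSet) : (segL G e ∩ segH G f).Subsingleton := by
  apply seg_subsingleton
  intro hc
  simp only [Ap, Bp, Cp] at hc
  nlinarith [mul_pos (hts_pos G e) (show (0:ℝ) < xb G f - xa G f - 1/2 by linarith [xab G f])]

lemma ss_HL (e f : G.edgeSet) : (segH G e ∩ segL G f).Subsingleton := by
  apply seg_subsingleton
  intro hc
  simp only [Ap, Bp, Cp] at hc
  nlinarith [mul_pos (hts_pos G f) (show (0:ℝ) < xb G e - xa G e - 1/2 by linarith [xab G e])]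

lemma ss_RH (e f : G.edgeSet) : (segR G e ∩ segH G f).Subsingleton := by
  apply seg_subsingleton
  intro hc
  simp only [Ap, Bp, Cp, Dp] at hc
  nlinarith [mul_pos (hts_pos G e) (show (0:ℝ) < xb G f - xa G f - 1/2 by linarith [xab G f])]

lemma ss_HR (e f : G.edgeSet) : (segH G e ∩ segR G f).Subsingleton := by
  apply seg_subsingleton
  intro hc
  simp only [Ap, Bp, Cp, Dp] at hc
  nlinarith [mul_pos (hts_pos G f) (show (0:ℝ) < xb G e - xa G e - 1/2 by linarith [xab G e])]

lemma segH_disj {e f : G.edgeSet} (hef : e ≠ f) {p : ℝ × ℝ}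
    (hpe : p ∈ segH G e) (hpf : p ∈ segH G f) : False :=
  hts_inj G hef (by rw [← segH_y G hpe, segH_y G hpf])

lemma slant_y_zero {e f : G.edgeSet} (hef : e ≠ f) {p : ℝ × ℝ}
    (hpe : p ∈ segL G e ∪ segR G e) (hpf : p ∈ segL G f ∪ segR G f) : p.2 = 0 := by
  rcases hpe with he | he <;> rcases hpf with hf | hf
  · -- L L
    by_cases hv : va G e = va G f
    · have hA : Ap G e = Ap G f := by unfold Ap xa; rw [hv]
      have hp : p = Ap G e :=
        ss_LL G hef ⟨he, hf⟩ ⟨left_mem_segment ℝ _ _, hA ▸ left_mem_segment ℝ _ _⟩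
      rw [hp]; rfl
    · exfalso
      rcases xsep hv with h | h <;>
        [skip; skip] <;>
        · have h1 := segL_x G he
          have h2 := segL_x G hf
          simp only [xa, xb] at h1 h2
          linarith
  · -- L R
    by_cases hv : va G e = vb G f
    · have hA : Ap G e = Dp G f := by unfold Ap Dp xa xb; rw [hv]
      have hp : p = Ap G e :=
        ss_LR G e f ⟨he, hf⟩ ⟨left_mem_segment ℝ _ _, hA ▸ right_mem_segment ℝ _ _⟩
      rw [hp]; rfl
    · exfalso
      rcases xsep hv with h | h <;>
        · have h1 := segL_x G he
          have h2 := segR_x G hf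
          simp only [xa, xb] at h1 h2
          linarith
  · -- R L
    by_cases hv : vb G e = va G f
    · have hA : Dp G e = Ap G f := by unfold Ap Dp xa xb; rw [hv]
      have hp : p = Dp G e :=
        ss_RL G e f ⟨he, hf⟩ ⟨right_mem_segment ℝ _ _, hA ▸ left_mem_segment ℝ _ _⟩
      rw [hp]; rfl
    · exfalso
      rcases xsep hv with h | h <;>
        · have h1 := segR_x G he
          have h2 := segL_x G hf
          simp only [xa, xb] at h1 h2
          linarith
  · -- R R
    by_cases hv : vb G e = vb G f
    · have hA : Dp G e = Dp G f := by unfold Dp xb; rw [hv]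
      have hp : p = Dp G e :=
        ss_RR G hef ⟨he, hf⟩ ⟨right_mem_segment ℝ _ _, hA ▸ right_mem_segment ℝ _ _⟩
      rw [hp]; rfl
    · exfalso
      rcases xsep hv with h | h <;>
        · have h1 := segR_x G he
          have h2 := segR_x G hf
          simp only [xa, xb] at h1 h2
          linarith

lemma crv_img_subset (e : G.edgeSet) :
    crv G e '' Set.Icc 0 1 ⊆ segL G e ∪ segH G e ∪ segR G e := by
  rintro _ ⟨t, ht, rfl⟩
  exact crv_in_segs G e ht

lemma crv_finite_inter {e f : G.edgeSet} (hef : e ≠ f) :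
    (crv G e '' Set.Icc 0 1 ∩ crv G f '' Set.Icc 0 1).Finite := by
  apply Set.Finite.subset
    (s := (segL G e ∪ segH G e ∪ segR G e) ∩ (segL G f ∪ segH G f ∪ segR G f))
  · have hHH : (segH G e ∩ segH G f).Finite :=
      Set.Finite.subset Set.finite_empty (fun x hx => (segH_disj G hef hx.1 hx.2).elim)
    rw [Set.union_inter_distrib_right, Set.union_inter_distrib_right,
      Set.inter_union_distrib_left, Set.inter_union_distrib_left,
      Set.inter_union_distrib_left, Set.inter_union_distrib_left,
      Set.inter_union_distrib_left, Set.inter_union_distrib_left]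
    exact ((((ss_LL G hef).finite.union (ss_LH G e f).finite).union (ss_LR G e f).finite).union
      (((ss_HL G e f).finite.union hHH).union (ss_HR G e f).finite)).union
      (((ss_RL G e f).finite.union (ss_RH G e f).finite).union (ss_RR G hef).finite)
  · exact Set.inter_subset_inter (crv_img_subset G e) (crv_img_subset G f)

lemma crv_no_triple {e f g : G.edgeSet} (hef : e ≠ f) (hfg : f ≠ g) (heg : e ≠ g) (p : ℝ × ℝ) :
    ¬ (p ∈ crv G e '' Set.Ioo 0 1 ∧ p ∈ crv G f '' Set.Ioo 0 1 ∧ p ∈ crv G g '' Set.Ioo 0 1) := by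
  rintro ⟨⟨t, ht, rfl⟩, ⟨u, hu, hpf⟩, ⟨w, hw, hpg⟩⟩
  set p := crv G e t with hp
  have hy : 0 < p.2 := crv_y_pos G e ht
  have hse := crv_in_segs G e (Set.Ioo_subset_Icc_self ht)
  have hsf : p ∈ segL G f ∪ segH G f ∪ segR G f :=
    hpf ▸ crv_in_segs G f (Set.Ioo_subset_Icc_self hu)
  have hsg : p ∈ segL G g ∪ segH G g ∪ segR G g :=
    hpg ▸ crv_in_segs G g (Set.Ioo_subset_Icc_self hw)
  have ce : p ∈ segH G e ∨ p ∈ segL G e ∪ segR G e := by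
    rcases hse with (h | h) | h
    exacts [Or.inr (Or.inl h), Or.inl h, Or.inr (Or.inr h)]
  have cf : p ∈ segH G f ∨ p ∈ segL G f ∪ segR G f := by
    rcases hsf with (h | h) | h
    exacts [Or.inr (Or.inl h), Or.inl h, Or.inr (Or.inr h)]
  have cg : p ∈ segH G g ∨ p ∈ segL G g ∪ segR G g := by
    rcases hsg with (h | h) | h
    exacts [Or.inr (Or.inl h), Or.inl h, Or.inr (Or.inr h)]
  rcases ce with he' | he' <;> rcases cf with hf' | hf' <;> rcases cg with hg' | hg'
  · exact segH_disj G hef he' hf'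
  · exact segH_disj G hef he' hf'
  · exact segH_disj G heg he' hg'
  · exact absurd (slant_y_zero G hfg hf' hg') (by linarith)
  · exact segH_disj G hfg hf' hg'
  · exact absurd (slant_y_zero G heg he' hg') (by linarith)
  · exact absurd (slant_y_zero G hef he' hf') (by linarith)
  · exact absurd (slant_y_zero G hef he' hf') (by linarith)

end DrawCon

open DrawCon in
noncomputable def drawingOf {n : ℕ} (G : SimpleGraph (Fin n)) : Drawing G where
  pos := fun v => (((v : ℕ) : ℝ), 0)
  pos_inj := by
    intro u v h
    have h1 : ((u : ℕ) : ℝ) = ((v : ℕ) : ℝ) := congrArg Prod.fst h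
    exact Fin.ext (by exact_mod_cast h1)
  curve := fun e => crv G e
  curve_cont := fun e => (crv_cont G e).continuousOn
  curve_inj := fun e => crv_inj G e
  curve_ends := by
    intro e
    refine ⟨va G e, vb G e, (edge_eq G e).symm, ?_, ?_⟩
    · show crv G e 0 = (((va G e : ℕ) : ℝ), 0)
      rw [show (((va G e : ℕ) : ℝ), (0:ℝ)) = (xa G e, 0) from rfl]
      norm_num [crv]
    · show crv G e 1 = (((vb G e : ℕ) : ℝ), 0)
      rw [show (((vb G e : ℕ) : ℝ), (0:ℝ)) = (xb G e, 0) from rfl]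
      norm_num [crv]
  curve_avoid := by
    rintro e t ht ⟨v, hv⟩
    have hy := crv_y_pos G e ht
    have hv' : (((v : ℕ) : ℝ), (0:ℝ)) = crv G e t := hv
    rw [← hv'] at hy
    simp at hy
  curve_finite_inter := fun e f hef => crv_finite_inter G hef
  no_triple_point := fun e f g hef hfg heg p => crv_no_triple G hef hfg heg p




end Construction

section Restrict

variable {n : ℕ} {G : SimpleGraph (Fin n)}

lemma edgeIncl_mem (s : Set (Fin n)) (e : (G.induce s).edgeSet) :
    Sym2.map Subtype.val e.val ∈ G.edgeSet := by
  obtain ⟨q, hq⟩ := e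
  induction q using Sym2.ind with
  | _ u v =>
    rw [SimpleGraph.mem_edgeSet] at hq
    simpa [Sym2.map_pair_eq, SimpleGraph.mem_edgeSet] using hq

noncomputable def edgeIncl (s : Set (Fin n)) (e : (G.induce s).edgeSet) : G.edgeSet :=
  ⟨Sym2.map Subtype.val e.val, edgeIncl_mem s e⟩

lemma edgeIncl_inj (s : Set (Fin n)) : Function.Injective (edgeIncl (G := G) s) := by
  intro e f h
  apply Subtype.ext
  apply Sym2.map.injective Subtype.val_injective
  exact congrArg Subtype.val h

lemma edgeIncl_vert_mem (s : Set (Fin n)) (e : (G.induce s).edgeSet) (x : Fin n)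
    (hx : x ∈ (edgeIncl s e : Sym2 (Fin n))) : x ∈ s := by
  rw [show (edgeIncl s e : Sym2 (Fin n)) = Sym2.map Subtype.val e.val from rfl,
    Sym2.mem_map] at hx
  obtain ⟨y, -, rfl⟩ := hx
  exact y.property

noncomputable def Drawing.restrict (D : Drawing G) (s : Set (Fin n)) :
    Drawing (G.induce s) where
  pos := fun v => D.pos ↑v
  pos_inj := D.pos_inj.comp Subtype.val_injective
  curve := fun e => D.curve (edgeIncl s e)
  curve_cont := fun e => D.curve_cont _
  curve_inj := fun e => D.curve_inj _
  curve_ends := by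
    intro e
    obtain ⟨a, b, hab, h0, h1⟩ := D.curve_ends (edgeIncl s e)
    have ha : a ∈ s := edgeIncl_vert_mem s e a (by rw [hab]; exact Sym2.mem_mk_left a b)
    have hb : b ∈ s := edgeIncl_vert_mem s e b (by rw [hab]; exact Sym2.mem_mk_right a b)
    refine ⟨⟨a, ha⟩, ⟨b, hb⟩, ?_, h0, h1⟩
    apply Sym2.map.injective Subtype.val_injective (f := (Subtype.val : s → Fin n))
    rw [Sym2.map_pair_eq]
    exact hab
  curve_avoid := by
    intro e t ht hmem
    apply D.curve_avoid (edgeIncl s e) t ht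
    obtain ⟨v, hv⟩ := hmem
    exact ⟨↑v, hv⟩
  curve_finite_inter := fun e f hef =>
    D.curve_finite_inter _ _ (fun h => hef (edgeIncl_inj s h))
  no_triple_point := fun e f g hef hfg heg p =>
    D.no_triple_point _ _ _ (fun h => hef (edgeIncl_inj s h))
      (fun h => hfg (edgeIncl_inj s h)) (fun h => heg (edgeIncl_inj s h)) p

lemma restrict_pairs_subset (D : Drawing G) (s : Set (Fin n)) :
    Sym2.map (edgeIncl s) '' (D.restrict s).crossingPairs ⊆ D.crossingPairs := by
  rintro q ⟨r, ⟨e, f, hef, rfl, p, hp⟩, rfl⟩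
  exact ⟨edgeIncl s e, edgeIncl s f, fun h => hef (edgeIncl_inj s h),
    by rw [Sym2.map_pair_eq], p, hp⟩

end Restrict

lemma sum_ncard_le {α ι : Type*} [Finite α] [Fintype ι] (A : ι → Set α)
    (hd : Pairwise (Function.onFun Disjoint A)) (S : Set α) (hsub : ∀ i, A i ⊆ S) :
    ∑ i : ι, (A i).ncard ≤ S.ncard := by
  have H : ∀ t : Finset ι, (∑ i ∈ t, (A i).ncard) = (⋃ i ∈ (t : Set ι), A i).ncard := by
    intro t
    induction t using Finset.cons_induction_on with
    | empty => simp
    | cons _ _ ha ih =>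
      rename_i a t'
      rw [Finset.sum_cons, ih]
      have hdisj : Disjoint (A a) (⋃ i ∈ (t' : Set ι), A i) := by
        rw [Set.disjoint_iUnion_right]
        intro i
        rw [Set.disjoint_iUnion_right]
        intro hi
        exact hd (fun h => ha (h ▸ hi))
      rw [← Set.ncard_union_eq hdisj (Set.toFinite _) (Set.toFinite _)]
      congr 1
      simp [Set.iUnion_or, Set.iUnion_union_distrib]
  calc ∑ i : ι, (A i).ncard = (⋃ i ∈ ((Finset.univ : Finset ι) : Set ι), A i).ncard :=
        H Finset.univ
    _ ≤ S.ncard := Set.ncard_le_ncard (by simpa using Set.iUnion_subset hsub) (Set.toFinite _)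

section PCR
variable {n : ℕ} {G : SimpleGraph (Fin n)}

lemma pcr_sum_le (k : ℕ) (P : Fin k → Set (Fin n))
    (hdisj : ∀ i j, i ≠ j → Disjoint (P i) (P j)) (D : Drawing G) :
    ∑ i : Fin k, pcrNum (G.induce (P i)) ≤ D.numCrossingPairs := by
  have step1 : ∀ i, pcrNum (G.induce (P i))
      ≤ (Sym2.map (edgeIncl (P i)) '' (D.restrict (P i)).crossingPairs).ncard := by
    intro i
    rw [Set.ncard_image_of_injective _ (Sym2.map.injective (edgeIncl_inj (P i)))]
    exact Nat.sInf_le ⟨D.restrict (P i), rfl⟩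
  calc ∑ i : Fin k, pcrNum (G.induce (P i))
      ≤ ∑ i : Fin k, (Sym2.map (edgeIncl (P i)) '' (D.restrict (P i)).crossingPairs).ncard :=
        Finset.sum_le_sum fun i _ => step1 i
    _ ≤ D.crossingPairs.ncard := by
        apply sum_ncard_le
        · intro i j hij
          rw [Function.onFun, Set.disjoint_left]
          rintro q hqi hqj
          obtain ⟨r, -, rfl⟩ := hqi
          obtain ⟨r', -, hq'⟩ := hqj
          set q := Sym2.map (edgeIncl (P i)) r with hq
          have hEi : (Quot.out q).1 ∈ q := Sym2.out_fst_mem q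
          set E := (Quot.out q).1 with hE
          have hEj : E ∈ Sym2.map (edgeIncl (P j)) r' := by rw [hq']; exact hEi
          obtain ⟨e, -, hei⟩ := (Sym2.mem_map).mp (hq ▸ hEi)
          obtain ⟨e', -, hej⟩ := (Sym2.mem_map).mp hEj
          have hx : (Quot.out (E : Sym2 (Fin n))).1 ∈ (E : Sym2 (Fin n)) :=
            Sym2.out_fst_mem _
          have hxi : (Quot.out (E : Sym2 (Fin n))).1 ∈ P i :=
            edgeIncl_vert_mem (P i) e ((Quot.out (E : Sym2 (Fin n))).1) (hei ▸ hx)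
          have hxj : (Quot.out (E : Sym2 (Fin n))).1 ∈ P j :=
            edgeIncl_vert_mem (P j) e' ((Quot.out (E : Sym2 (Fin n))).1) (hej ▸ hx)
          exact Set.disjoint_left.mp (hdisj i j hij) hxi hxj
        · exact fun i => restrict_pairs_subset D (P i)


end PCR

lemma deg_induce_le {n : ℕ} (G : SimpleGraph (Fin n)) (s : Set (Fin n)) (v : s) :
    (((G.induce s).neighborSet v).ncard) ≤ (G.neighborSet ↑v).ncard := by
  apply Set.ncard_le_ncard_of_injOn (Subtype.val)
  · intro a ha
    exact ha
  · exact Subtype.val_injective.injOn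

lemma bds_sum_le (n k : ℕ) (G : SimpleGraph (Fin n)) (P : Fin k → Set (Fin n))
    (hdisj : ∀ i j, i ≠ j → Disjoint (P i) (P j))
    (hcover : (⋃ i, P i) = Set.univ) :
    ∑ i : Fin k, bds (G.induce (P i)) ≤ bds G := by
  have key : ∀ i, bds (G.induce (P i)) ≤ ∑ᶠ v ∈ P i, ((G.neighborSet v).ncard).choose 2 := by
    intro i
    rw [← finsum_set_coe_eq_finsum_mem]
    unfold bds
    haveI : Fintype (P i) := Fintype.ofFinite _
    rw [finsum_eq_sum_of_fintype, finsum_eq_sum_of_fintype]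
    apply Finset.sum_le_sum
    intro v _
    exact Nat.choose_le_choose 2 (deg_induce_le G (P i) v)
  calc ∑ i : Fin k, bds (G.induce (P i))
      ≤ ∑ i : Fin k, ∑ᶠ v ∈ P i, ((G.neighborSet v).ncard).choose 2 :=
        Finset.sum_le_sum fun i _ => key i
    _ = ∑ᶠ i : Fin k, ∑ᶠ v ∈ P i, ((G.neighborSet v).ncard).choose 2 :=
        (finsum_eq_sum_of_fintype _).symm
    _ = ∑ᶠ v ∈ ⋃ i, P i, ((G.neighborSet v).ncard).choose 2 := by
        rw [finsum_mem_iUnion]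
        · intro a b hab
          exact hdisj a b hab
        · intro i; exact Set.toFinite _
    _ = bds G := by
        rw [hcover, finsum_mem_univ]; rfl


/-- If `V = V₁ ⊔ … ⊔ V_k` is a partition of the vertex set of `G` and `G_i = G[V_i]`, then
`Σ_i (pcr(G_i) + bds(G_i)) ≤ pcr(G) + bds(G)`. -/
theorem sum_pcr_bds_le (n k : ℕ) (G : SimpleGraph (Fin n)) (P : Fin k → Set (Fin n))
    (hdisj : ∀ i j, i ≠ j → Disjoint (P i) (P j))
    (hcover : (⋃ i, P i) = Set.univ) :
    ∑ i : Fin k, (pcrNum (G.induce (P i)) + bds (G.induce (P i)))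
      ≤ pcrNum G + bds G := by
  have hne : {m | ∃ D : Drawing G, D.numCrossingPairs = m}.Nonempty :=
    ⟨(drawingOf G).numCrossingPairs, drawingOf G, rfl⟩
  obtain ⟨D, hD⟩ := Nat.sInf_mem hne
  calc ∑ i : Fin k, (pcrNum (G.induce (P i)) + bds (G.induce (P i)))
      = ∑ i : Fin k, pcrNum (G.induce (P i)) + ∑ i : Fin k, bds (G.induce (P i)) :=
        Finset.sum_add_distrib
    _ ≤ D.numCrossingPairs + bds G :=
        Nat.add_le_add (pcr_sum_le k P hdisj D) (bds_sum_le n k G P hdisj hcover)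
    _ = pcrNum G + bds G := congrArg (· + bds G) hD
end

section
/- Let k ≥ 3 and let P_1, P_2, …, P_k be nonempty finite sets of points in the plane whose union is in general position, such that (P_1, …, P_k) has same-type transversals and the convex hulls of P_1, …, P_k are pairwise disjoint. Then every straight line in the plane intersects the convex hulls of at most two of the sets P_1, …, P_k. -/
/-- The orientation (±1, or 0 for degenerate triples) of an ordered triple of points in the
plane. -/
noncomputable def orient (p q r : ℝ × ℝ) : ℝ :=
  Real.sign ((q.1 - p.1) * (r.2 - p.2) - (q.2 - p.2) * (r.1 - p.1))

/-- A set of points in the plane is in general position if no three of its points are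
collinear. -/
def InGeneralPosition (S : Set (ℝ × ℝ)) : Prop :=
  ∀ p ∈ S, ∀ q ∈ S, ∀ r ∈ S, p ≠ q → p ≠ r → q ≠ r →
    ¬ Collinear ℝ ({p, q, r} : Set (ℝ × ℝ))

/-- `(P 0, …, P (k−1))` has same-type transversals: any two transversals have the same order
type, i.e. every triple of indices receives the same orientation in all transversals. -/
def SameTypeTransversals {k : ℕ} (P : Fin k → Finset (ℝ × ℝ)) : Prop :=
  ∀ f g : Fin k → ℝ × ℝ, (∀ i, f i ∈ P i) → (∀ i, g i ∈ P i) →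
    ∀ i j l : Fin k, i < j → j < l →
      orient (f i) (f j) (f l) = orient (g i) (g j) (g l)

/-- auxiliary determinant -/
def Ddet (p q r : ℝ × ℝ) : ℝ :=
  (q.1 - p.1) * (r.2 - p.2) - (q.2 - p.2) * (r.1 - p.1)

lemma Ddet_cyclic (p q r : ℝ × ℝ) : Ddet p q r = Ddet q r p := by
  simp only [Ddet]; ring

lemma Ddet_swap (p q r : ℝ × ℝ) : Ddet p q r = -Ddet p r q := by
  simp only [Ddet]; ring

lemma collinear_Ddet {p q r : ℝ × ℝ} (h : Collinear ℝ ({p, q, r} : Set (ℝ × ℝ))) :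
    Ddet p q r = 0 := by
  rw [collinear_iff_of_mem (Set.mem_insert p _)] at h
  obtain ⟨v, hv⟩ := h
  obtain ⟨t1, ht1⟩ := hv q (by simp)
  obtain ⟨t2, ht2⟩ := hv r (by simp)
  have h1 : q.1 = t1 * v.1 + p.1 := by rw [ht1]; rfl
  have h2 : q.2 = t1 * v.2 + p.2 := by rw [ht1]; rfl
  have h3 : r.1 = t2 * v.1 + p.1 := by rw [ht2]; rfl
  have h4 : r.2 = t2 * v.2 + p.2 := by rw [ht2]; rfl
  simp only [Ddet, h1, h2, h3, h4]; ring

lemma Ddet_collinear {p q r : ℝ × ℝ} (h : Ddet p q r = 0) :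
    Collinear ℝ ({p, q, r} : Set (ℝ × ℝ)) := by
  by_cases hpq : q = p
  · subst hpq
    have : ({q, q, r} : Set (ℝ × ℝ)) = {q, r} := by simp [Set.insert_comm]
    rw [this]; exact collinear_pair ℝ q r
  · rw [collinear_iff_of_mem (Set.mem_insert p _)]
    refine ⟨q - p, ?_⟩
    have hv : q.1 - p.1 ≠ 0 ∨ q.2 - p.2 ≠ 0 := by
      by_contra hc
      push_neg at hc
      exact hpq (Prod.ext (by linarith [hc.1]) (by linarith [hc.2]))
    intro x hx
    rcases hx with rfl | rfl | rfl
    · exact ⟨0, by simp⟩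
    · exact ⟨1, by ext <;> simp [Prod.fst_sub, Prod.snd_sub] <;> ring⟩
    · simp only [Ddet] at h
      rcases hv with h1 | h2
      · refine ⟨(x.1 - p.1) / (q.1 - p.1), ?_⟩
        ext
        · show x.1 = (x.1 - p.1) / (q.1 - p.1) * (q.1 - p.1) + p.1
          field_simp
          ring
        · show x.2 = (x.1 - p.1) / (q.1 - p.1) * (q.2 - p.2) + p.2
          field_simp
          nlinarith [h]
      · refine ⟨(x.2 - p.2) / (q.2 - p.2), ?_⟩
        ext
        · show x.1 = (x.2 - p.2) / (q.2 - p.2) * (q.1 - p.1) + p.1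
          field_simp
          nlinarith [h]
        · show x.2 = (x.2 - p.2) / (q.2 - p.2) * (q.2 - p.2) + p.2
          field_simp
          ring

lemma Ddet_affine1 (a b : ℝ) (hab : a + b = 1) (x x' q r : ℝ × ℝ) :
    Ddet (a • x + b • x') q r = a * Ddet x q r + b * Ddet x' q r := by
  have hb : b = 1 - a := by linarith
  subst hb
  simp only [Ddet, Prod.fst_add, Prod.snd_add, Prod.smul_fst, Prod.smul_snd, smul_eq_mul]
  ring

lemma pos_hull (q r : ℝ × ℝ) (S : Set (ℝ × ℝ)) (h : ∀ p ∈ S, 0 < Ddet p q r) :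
    ∀ x ∈ convexHull ℝ S, 0 < Ddet x q r := by
  have hc : Convex ℝ {x : ℝ × ℝ | 0 < Ddet x q r} := by
    intro x hx y hy a b ha hb hab
    simp only [Set.mem_setOf_eq] at *
    rw [Ddet_affine1 a b hab]
    rcases ha.eq_or_lt with h | h
    · have hb1 : b = 1 := by linarith
      rw [← h, hb1]; simpa using hy
    · nlinarith [mul_pos h hx, mul_nonneg hb hy.le]
  exact fun x hx => convexHull_min h hc hx

lemma pos_hull3 (A B C : Set (ℝ × ℝ))
    (h : ∀ p ∈ A, ∀ q ∈ B, ∀ r ∈ C, 0 < Ddet p q r) :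
    ∀ u ∈ convexHull ℝ A, ∀ v ∈ convexHull ℝ B, ∀ w ∈ convexHull ℝ C,
      0 < Ddet u v w := by
  intro u hu v hv w hw
  have s1 : ∀ q ∈ B, ∀ r ∈ C, 0 < Ddet u q r :=
    fun q hq r hr => pos_hull q r A (fun p hp => h p hp q hq r hr) u hu
  have s2 : ∀ r ∈ C, 0 < Ddet u v r := by
    intro r hr
    have hB : ∀ q ∈ B, 0 < Ddet q r u := by
      intro q hq
      have := s1 q hq r hr
      rwa [Ddet_cyclic u q r] at this
    have := pos_hull r u B hB v hv
    rwa [Ddet_cyclic u v r]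
  have hC : ∀ r ∈ C, 0 < Ddet r u v := by
    intro r hr
    have := s2 r hr
    rwa [Ddet_cyclic u v r, Ddet_cyclic v r u] at this
  have := pos_hull u v C hC w hw
  rwa [Ddet_cyclic u v w, Ddet_cyclic v w u]

lemma sign_one_pos {x : ℝ} (h : Real.sign x = 1) : 0 < x := by
  rcases lt_trichotomy x 0 with h1 | h1 | h1
  · rw [Real.sign_of_neg h1] at h; norm_num at h
  · rw [h1, Real.sign_zero] at h; norm_num at h
  · exact h1

lemma order3 {S : Set (Fin k)} {a b c : Fin k} (ha : a ∈ S) (hb : b ∈ S) (hc : c ∈ S)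
    (hab : a ≠ b) (hac : a ≠ c) (hbc : b ≠ c) :
    ∃ i j l, i ∈ S ∧ j ∈ S ∧ l ∈ S ∧ i < j ∧ j < l := by
  rcases hab.lt_or_gt with h1 | h1 <;> rcases hac.lt_or_gt with h2 | h2 <;>
    rcases hbc.lt_or_gt with h3 | h3
  · exact ⟨a, b, c, ha, hb, hc, h1, h3⟩
  · exact ⟨a, c, b, ha, hc, hb, h2, h3⟩
  · exact absurd (h2.trans (h1.trans h3)) (lt_irrefl _)
  · exact ⟨c, a, b, hc, ha, hb, h2, h1⟩
  · exact ⟨b, a, c, hb, ha, hc, h1, h2⟩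
  · exact absurd (h1.trans (h2.trans h3)) (lt_irrefl _)
  · exact ⟨b, c, a, hb, hc, ha, h3, h2⟩
  · exact ⟨c, b, a, hc, hb, ha, h3, h1⟩

/-- If `(P 1, …, P k)` (with `k ≥ 3`) has same-type transversals and the convex hulls of the
`P i` are pairwise disjoint, then every straight line intersects at most two of the convex
hulls. -/
theorem line_meets_at_most_two_hulls (k : ℕ) (hk : 3 ≤ k) (P : Fin k → Finset (ℝ × ℝ))
    (hne : ∀ i, (P i).Nonempty)
    (hgen : InGeneralPosition (⋃ i, (P i : Set (ℝ × ℝ))))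
    (hst : SameTypeTransversals P)
    (hdisj : ∀ i j, i ≠ j →
      Disjoint (convexHull ℝ (P i : Set (ℝ × ℝ))) (convexHull ℝ (P j : Set (ℝ × ℝ)))) :
    ∀ a b : ℝ × ℝ, a ≠ b →
      ({i : Fin k | ((affineSpan ℝ ({a, b} : Set (ℝ × ℝ)) : Set (ℝ × ℝ))
          ∩ convexHull ℝ (P i : Set (ℝ × ℝ))).Nonempty}).ncard ≤ 2 := by
  intro a b hab
  by_contra hcon
  push_neg at hcon
  set S := {i : Fin k | ((affineSpan ℝ ({a, b} : Set (ℝ × ℝ)) : Set (ℝ × ℝ))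
    ∩ convexHull ℝ (P i : Set (ℝ × ℝ))).Nonempty} with hS
  obtain ⟨x, hx, y, hy, z, hz, hxy, hxz, hyz⟩ := (Set.two_lt_ncard (Set.toFinite S)).mp hcon
  obtain ⟨i, j, l, hiS, hjS, hlS, hij, hjl⟩ := order3 hx hy hz hxy hxz hyz
  -- base transversal
  set f₀ : Fin k → ℝ × ℝ := fun m => (hne m).choose with hf₀
  have hf₀mem : ∀ m, f₀ m ∈ P m := fun m => (hne m).choose_spec
  -- distinct points across different sets
  have hdistinct : ∀ m n : Fin k, m ≠ n → ∀ p, p ∈ P m → p ∈ P n → False := by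
    intro m n hmn p hpm hpn
    exact Set.disjoint_left.mp (hdisj m n hmn)
      (subset_convexHull ℝ _ hpm) (subset_convexHull ℝ _ hpn)
  -- orientation is constant over transversal triples from P i, P j, P l
  have horient : ∀ p ∈ P i, ∀ q ∈ P j, ∀ r ∈ P l,
      orient p q r = orient (f₀ i) (f₀ j) (f₀ l) := by
    intro p hp q hq r hr
    set f : Fin k → ℝ × ℝ := fun m =>
      if m = i then p else if m = j then q else if m = l then r else f₀ m with hf
    have hfmem : ∀ m, f m ∈ P m := by
      intro m
      simp only [hf]
      split_ifs with h1 h2 h3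
      · subst h1; exact hp
      · subst h2; exact hq
      · subst h3; exact hr
      · exact hf₀mem m
    have hfi : f i = p := by simp [hf]
    have hfj : f j = q := by simp [hf, hij.ne']
    have hfl : f l = r := by simp [hf, (hij.trans hjl).ne', hjl.ne']
    have := hst f f₀ hfmem hf₀mem i j l hij hjl
    rwa [hfi, hfj, hfl] at this
  -- the base triple is non-degenerate
  have hne0 : Ddet (f₀ i) (f₀ j) (f₀ l) ≠ 0 := by
    intro h0
    have hij' : f₀ i ≠ f₀ j := by
      intro he
      exact hdistinct i j hij.ne (f₀ i) (hf₀mem i) (he ▸ hf₀mem j)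
    have hil' : f₀ i ≠ f₀ l := by
      intro he
      exact hdistinct i l (hij.trans hjl).ne (f₀ i) (hf₀mem i) (he ▸ hf₀mem l)
    have hjl' : f₀ j ≠ f₀ l := by
      intro he
      exact hdistinct j l hjl.ne (f₀ j) (hf₀mem j) (he ▸ hf₀mem l)
    exact hgen (f₀ i) (Set.mem_iUnion.mpr ⟨i, hf₀mem i⟩)
      (f₀ j) (Set.mem_iUnion.mpr ⟨j, hf₀mem j⟩)
      (f₀ l) (Set.mem_iUnion.mpr ⟨l, hf₀mem l⟩) hij' hil' hjl'
      (Ddet_collinear h0)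
  -- points of the line in the three hulls
  obtain ⟨u, huL, huH⟩ := hiS
  obtain ⟨v, hvL, hvH⟩ := hjS
  obtain ⟨w, hwL, hwH⟩ := hlS
  have hcol : Collinear ℝ ({u, v, w} : Set (ℝ × ℝ)) := by
    refine (collinear_insert_insert_insert_of_mem_affineSpan_pair
      (p₄ := a) (p₅ := b) huL hvL hwL).subset ?_
    intro t ht
    simp only [Set.mem_insert_iff, Set.mem_singleton_iff] at ht ⊢
    tauto
  have hD0 : Ddet u v w = 0 := collinear_Ddet hcol
  -- the two sign cases
  rcases hne0.lt_or_gt with hneg | hpos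
  · -- all transversal triples have negative Ddet
    have hall : ∀ p ∈ P i, ∀ q ∈ P j, ∀ r ∈ P l, 0 < Ddet p r q := by
      intro p hp q hq r hr
      have h1 : orient p q r = orient (f₀ i) (f₀ j) (f₀ l) := horient p hp q hq r hr
      have h2 : orient (f₀ i) (f₀ j) (f₀ l) = -1 := Real.sign_of_neg hneg
      have h3 : Real.sign (Ddet p r q) = 1 := by
        have : Ddet p q r = -Ddet p r q := Ddet_swap p q r
        have h4 : orient p q r = Real.sign (Ddet p q r) := rfl
        rw [h4, this, Real.sign_neg, h2] at h1
        linarith [h1]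
      exact sign_one_pos h3
    have hall' : ∀ p ∈ (P i : Set (ℝ × ℝ)), ∀ r ∈ (P l : Set (ℝ × ℝ)),
        ∀ q ∈ (P j : Set (ℝ × ℝ)), 0 < Ddet p r q := by
      intro p hp r hr q hq; exact hall p hp q hq r hr
    have := pos_hull3 (P i : Set (ℝ × ℝ)) (P l : Set (ℝ × ℝ)) (P j : Set (ℝ × ℝ))
      hall' u huH w hwH v hvH
    rw [← neg_eq_zero] at hD0
    rw [← Ddet_swap] at hD0
    linarith
  · have hall : ∀ p ∈ (P i : Set (ℝ × ℝ)), ∀ q ∈ (P j : Set (ℝ × ℝ)),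
        ∀ r ∈ (P l : Set (ℝ × ℝ)), 0 < Ddet p q r := by
      intro p hp q hq r hr
      have h1 : orient p q r = orient (f₀ i) (f₀ j) (f₀ l) := horient p hp q hq r hr
      have h2 : orient (f₀ i) (f₀ j) (f₀ l) = 1 := Real.sign_of_pos hpos
      exact sign_one_pos (h1.trans h2)
    have := pos_hull3 (P i : Set (ℝ × ℝ)) (P j : Set (ℝ × ℝ)) (P l : Set (ℝ × ℝ))
      hall u huH v hvH w hwH
    linarith
end

section
/- For every integer k ≥ 3 there is a constant c(k) > 0 with the following property: if P is a finite set of points in general position in the plane with |P| ≥ k, then there are k subsets P_1, P_2, …, P_k ⊆ P with pairwise disjoint convex hulls and |P_1| = |P_2| = … = |P_k| ≥ c(k)·|P|, such that (P_1, …, P_k) has same-type transversals. -/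
open Finset

/-- separation of two finite point sets by a line -/
def LSep (A B : Finset (ℝ × ℝ)) : Prop :=
  ∃ u v c : ℝ, (∀ x ∈ A, u * x.1 + v * x.2 < c) ∧ (∀ x ∈ B, c < u * x.1 + v * x.2)

lemma sep_mono {A B A' B' : Finset (ℝ × ℝ)} (h : LSep A B) (hA : A' ⊆ A) (hB : B' ⊆ B) :
    LSep A' B' := by
  obtain ⟨u, v, c, h1, h2⟩ := h
  exact ⟨u, v, c, fun x hx => h1 x (hA hx), fun x hx => h2 x (hB hx)⟩

lemma lin_map (u v : ℝ) : IsLinearMap ℝ (fun x : ℝ × ℝ => u * x.1 + v * x.2) := by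
  constructor
  · intro x y; simp only [Prod.fst_add, Prod.snd_add]; ring
  · intro t x; simp only [Prod.smul_fst, Prod.smul_snd, smul_eq_mul]; ring

lemma hull_lt {A : Finset (ℝ × ℝ)} {u v c : ℝ} (h : ∀ x ∈ A, u * x.1 + v * x.2 < c) :
    convexHull ℝ (A : Set (ℝ × ℝ)) ⊆ {x : ℝ × ℝ | u * x.1 + v * x.2 < c} :=
  convexHull_min (fun x hx => h x hx) (convex_halfSpace_lt (lin_map u v) c)

lemma hull_gt {A : Finset (ℝ × ℝ)} {u v c : ℝ} (h : ∀ x ∈ A, c < u * x.1 + v * x.2) :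
    convexHull ℝ (A : Set (ℝ × ℝ)) ⊆ {x : ℝ × ℝ | c < u * x.1 + v * x.2} :=
  convexHull_min (fun x hx => h x hx) (convex_halfSpace_gt (lin_map u v) c)

lemma sep_disjoint {A B : Finset (ℝ × ℝ)} (h : LSep A B) :
    Disjoint (convexHull ℝ (A : Set (ℝ × ℝ))) (convexHull ℝ (B : Set (ℝ × ℝ))) := by
  obtain ⟨u, v, c, h1, h2⟩ := h
  rw [Set.disjoint_left]
  intro x hxA hxB
  have g1 : u * x.1 + v * x.2 < c := hull_lt h1 hxA
  have g2 : c < u * x.1 + v * x.2 := hull_gt h2 hxB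
  linarith

lemma collinear_of_line {u v c : ℝ} (huv : ¬(u = 0 ∧ v = 0)) {p q r : ℝ × ℝ}
    (hp : u * p.1 + v * p.2 = c) (hq : u * q.1 + v * q.2 = c) (hr : u * r.1 + v * r.2 = c) :
    Collinear ℝ ({p, q, r} : Set (ℝ × ℝ)) := by
  have hD : (0:ℝ) < u ^ 2 + v ^ 2 := by
    rcases not_and_or.1 huv with hu | hv
    · have : (0:ℝ) < u ^ 2 := lt_of_le_of_ne (sq_nonneg u) (Ne.symm (pow_ne_zero 2 hu))
      nlinarith [sq_nonneg v]
    · have : (0:ℝ) < v ^ 2 := lt_of_le_of_ne (sq_nonneg v) (Ne.symm (pow_ne_zero 2 hv))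
      nlinarith [sq_nonneg u]
  rw [collinear_iff_of_mem (Set.mem_insert p _)]
  refine ⟨(v, -u), ?_⟩
  intro y hy
  have hy' : u * y.1 + v * y.2 = c := by
    simp only [Set.mem_insert_iff, Set.mem_singleton_iff] at hy
    rcases hy with h | h | h <;> subst h <;> assumption
  refine ⟨(v * (y.1 - p.1) - u * (y.2 - p.2)) / (u ^ 2 + v ^ 2), ?_⟩
  have heq : u * (y.1 - p.1) + v * (y.2 - p.2) = 0 := by linarith
  have hD' : u ^ 2 + v ^ 2 ≠ 0 := ne_of_gt hD
  apply Prod.ext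
  · show y.1 = (v * (y.1 - p.1) - u * (y.2 - p.2)) / (u ^ 2 + v ^ 2) * v + p.1
    field_simp
    linear_combination u * heq
  · show y.2 = (v * (y.1 - p.1) - u * (y.2 - p.2)) / (u ^ 2 + v ^ 2) * (-u) + p.2
    field_simp
    linear_combination v * heq

/-- at most two points of a set in general position lie on any line -/
lemma online_le_two {P X : Finset (ℝ × ℝ)} (hP : InGeneralPosition (P : Set (ℝ × ℝ)))
    (hX : X ⊆ P) {u v c : ℝ} (huv : ¬(u = 0 ∧ v = 0)) :
    (X.filter fun x => u * x.1 + v * x.2 = c).card ≤ 2 := by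
  by_contra h
  push_neg at h
  obtain ⟨p, q, r, hp, hq, hr, hpq, hpr, hqr⟩ := Finset.two_lt_card_iff.1 h
  rw [Finset.mem_filter] at hp hq hr
  exact hP p (hX hp.1) q (hX hq.1) r (hX hr.1) hpq hpr hqr
    (collinear_of_line huv hp.2 hq.2 hr.2)

lemma card_le_strict_add_two {P X : Finset (ℝ × ℝ)} (hP : InGeneralPosition (P : Set (ℝ × ℝ)))
    (hX : X ⊆ P) {u v c : ℝ} (huv : ¬(u = 0 ∧ v = 0)) :
    (X.filter fun x => u * x.1 + v * x.2 ≤ c).card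
      ≤ (X.filter fun x => u * x.1 + v * x.2 < c).card + 2 := by
  have hsub : (X.filter fun x => u * x.1 + v * x.2 ≤ c)
      ⊆ (X.filter fun x => u * x.1 + v * x.2 < c) ∪ (X.filter fun x => u * x.1 + v * x.2 = c) := by
    intro x hx
    rw [Finset.mem_filter] at hx
    rcases lt_or_eq_of_le hx.2 with h | h
    · exact Finset.mem_union_left _ (Finset.mem_filter.2 ⟨hx.1, h⟩)
    · exact Finset.mem_union_right _ (Finset.mem_filter.2 ⟨hx.1, h⟩)
  calc (X.filter fun x => u * x.1 + v * x.2 ≤ c).card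
      ≤ _ := Finset.card_le_card hsub
    _ ≤ (X.filter fun x => u * x.1 + v * x.2 < c).card
          + (X.filter fun x => u * x.1 + v * x.2 = c).card := Finset.card_union_le _ _
    _ ≤ _ := by have := online_le_two hP hX (c := c) huv; omega

/-- centerpoint theorem in the plane (via Helly) -/
lemma centerpoint (A : Finset (ℝ × ℝ)) :
    ∃ q : ℝ × ℝ, ∀ u v c : ℝ, u * q.1 + v * q.2 ≤ c →
      A.card ≤ 3 * (A.filter fun x => u * x.1 + v * x.2 ≤ c).card := by
  classical
  rcases A.eq_empty_or_nonempty with rfl | hA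
  · exact ⟨0, fun u v c _ => by simp⟩
  have hApos : 0 < A.card := Finset.card_pos.2 hA
  set s : Finset (Finset (ℝ × ℝ)) :=
    A.powerset.filter (fun S => 2 * A.card < 3 * S.card) with hs
  have hrank : Module.finrank ℝ (ℝ × ℝ) = 2 := by simp
  have hq : (⋂ S ∈ s, convexHull ℝ (S : Set (ℝ × ℝ))).Nonempty := by
    apply Convex.helly_theorem' (fun S _ => convex_convexHull ℝ _)
    intro I hIs hIcard
    rw [hrank] at hIcard
    rcases I.eq_empty_or_nonempty with rfl | hI
    · simp
    -- find a point of A lying in every member of I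
    have hbig : ∀ S ∈ I, S ⊆ A ∧ 2 * A.card < 3 * S.card := by
      intro S hS
      have := hIs hS
      rw [hs, Finset.mem_filter, Finset.mem_powerset] at this
      exact this
    set D : Finset (ℝ × ℝ) := I.biUnion (fun S => A \ S) with hD
    have hDcard : 3 * D.card ≤ 3 * (A.card - 1) := by
      calc 3 * D.card ≤ 3 * ∑ S ∈ I, (A \ S).card := by
            rw [hD]
            exact Nat.mul_le_mul_left 3 Finset.card_biUnion_le
        _ = ∑ S ∈ I, 3 * (A \ S).card := by rw [Finset.mul_sum]
        _ ≤ I.card • (A.card - 1) := by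
            apply Finset.sum_le_card_nsmul
            intro S hS
            obtain ⟨hSA, hSbig⟩ := hbig S hS
            have h1 : (A \ S).card = A.card - S.card := Finset.card_sdiff_of_subset hSA
            have h2 : S.card ≤ A.card := Finset.card_le_card hSA
            omega
        _ ≤ 3 * (A.card - 1) := by
            rw [smul_eq_mul]
            have : I.card ≤ 3 := hIcard
            have : A.card - 1 ≥ 0 := by omega
            nlinarith
    have hDlt : D.card < A.card := by omega
    have hns : ¬ A ⊆ D := fun h => absurd (Finset.card_le_card h) (by omega)
    obtain ⟨x, hxA, hxD⟩ := Finset.not_subset.1 hns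
    refine ⟨x, Set.mem_biInter ?_⟩
    intro S hS
    apply subset_convexHull ℝ (S : Set (ℝ × ℝ))
    have hxS : x ∈ S := by
      by_contra hxS
      exact hxD (Finset.mem_biUnion.2 ⟨S, hS, Finset.mem_sdiff.2 ⟨hxA, hxS⟩⟩)
    exact_mod_cast hxS
  obtain ⟨q, hq⟩ := hq
  refine ⟨q, ?_⟩
  intro u v c hqc
  by_contra hcon
  push_neg at hcon
  set S := A.filter (fun x => ¬(u * x.1 + v * x.2 ≤ c)) with hSdef
  have hcards := Finset.card_filter_add_card_filter_not
    (s := A) (p := fun x => u * x.1 + v * x.2 ≤ c)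
  have hSmem : S ∈ s := by
    rw [hs, Finset.mem_filter, Finset.mem_powerset]
    refine ⟨Finset.filter_subset _ _, ?_⟩
    rw [hSdef]
    omega
  have hqS : q ∈ convexHull ℝ (S : Set (ℝ × ℝ)) := by
    exact Set.mem_iInter₂.1 hq S hSmem
  have : c < u * q.1 + v * q.2 := by
    refine hull_gt ?_ hqS
    intro x hx
    have := (Finset.mem_filter.1 hx).2
    push_neg at this
    exact this
  linarith

lemma exists_line (q₁ q₂ : ℝ × ℝ) :
    ∃ u v c : ℝ, ¬(u = 0 ∧ v = 0) ∧ u * q₁.1 + v * q₁.2 = c ∧ u * q₂.1 + v * q₂.2 = c := by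
  by_cases h : q₁ = q₂
  · exact ⟨1, 0, q₁.1, by simp, by ring, by rw [← h]; ring⟩
  · refine ⟨q₁.2 - q₂.2, q₂.1 - q₁.1, (q₁.2 - q₂.2) * q₁.1 + (q₂.1 - q₁.1) * q₁.2, ?_, by ring, by ring⟩
    rintro ⟨h1, h2⟩
    exact h (Prod.ext (by linarith) (by linarith))

lemma filter_card_congr (X : Finset (ℝ × ℝ)) {p q : ℝ × ℝ → Prop}
    [DecidablePred p] [DecidablePred q] (h : ∀ x, p x ↔ q x) :
    (X.filter p).card = (X.filter q).card := by
  rw [Finset.filter_congr (fun x _ => h x)]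

lemma cover_card (X : Finset (ℝ × ℝ)) (u v c : ℝ) :
    X.card ≤ (X.filter fun x => u * x.1 + v * x.2 ≤ c).card
      + (X.filter fun x => c ≤ u * x.1 + v * x.2).card := by
  have hsub : X ⊆ (X.filter fun x => u * x.1 + v * x.2 ≤ c)
      ∪ (X.filter fun x => c ≤ u * x.1 + v * x.2) := by
    intro x hx
    rcases le_total (u * x.1 + v * x.2) c with h | h
    · exact Finset.mem_union_left _ (Finset.mem_filter.2 ⟨hx, h⟩)
    · exact Finset.mem_union_right _ (Finset.mem_filter.2 ⟨hx, h⟩)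
  calc X.card ≤ _ := Finset.card_le_card hsub
    _ ≤ _ := Finset.card_union_le _ _

/-- the key one-step lemma: a single line that simultaneously keeps a third of `A`
strictly on one side and a third of `B` and half of `C` strictly on the other side. -/
lemma step {P : Finset (ℝ × ℝ)} (hP : InGeneralPosition (P : Set (ℝ × ℝ)))
    {A B C : Finset (ℝ × ℝ)} (hA : A ⊆ P) (hB : B ⊆ P) (hC : C ⊆ P) :
    ∃ u v c : ℝ,
      A.card ≤ 3 * (A.filter fun x => u * x.1 + v * x.2 < c).card + 6 ∧
      B.card ≤ 3 * (B.filter fun x => c < u * x.1 + v * x.2).card + 6 ∧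
      C.card ≤ 3 * (C.filter fun x => c < u * x.1 + v * x.2).card + 6 := by
  obtain ⟨qA, hqA⟩ := centerpoint A
  obtain ⟨qB, hqB⟩ := centerpoint B
  obtain ⟨u, v, c, huv, hl1, hl2⟩ := exists_line qA qB
  have huv' : ¬(-u = 0 ∧ -v = 0) := by
    rintro ⟨h1, h2⟩; exact huv ⟨by linarith, by linarith⟩
  -- closed-side centerpoint bounds
  have hA1 : A.card ≤ 3 * (A.filter fun x => u * x.1 + v * x.2 ≤ c).card :=
    hqA u v c hl1.le
  have hA2 : A.card ≤ 3 * (A.filter fun x => -u * x.1 + -v * x.2 ≤ -c).card :=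
    hqA (-u) (-v) (-c) (by linarith)
  have hB1 : B.card ≤ 3 * (B.filter fun x => u * x.1 + v * x.2 ≤ c).card :=
    hqB u v c hl2.le
  have hB2 : B.card ≤ 3 * (B.filter fun x => -u * x.1 + -v * x.2 ≤ -c).card :=
    hqB (-u) (-v) (-c) (by linarith)
  -- strict-side versions
  have sA1 : (A.filter fun x => u * x.1 + v * x.2 ≤ c).card
      ≤ (A.filter fun x => u * x.1 + v * x.2 < c).card + 2 :=
    card_le_strict_add_two hP hA huv
  have sA2 : (A.filter fun x => -u * x.1 + -v * x.2 ≤ -c).card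
      ≤ (A.filter fun x => -u * x.1 + -v * x.2 < -c).card + 2 :=
    card_le_strict_add_two hP hA huv'
  have sB1 : (B.filter fun x => u * x.1 + v * x.2 ≤ c).card
      ≤ (B.filter fun x => u * x.1 + v * x.2 < c).card + 2 :=
    card_le_strict_add_two hP hB huv
  have sB2 : (B.filter fun x => -u * x.1 + -v * x.2 ≤ -c).card
      ≤ (B.filter fun x => -u * x.1 + -v * x.2 < -c).card + 2 :=
    card_le_strict_add_two hP hB huv'
  have sC1 : (C.filter fun x => u * x.1 + v * x.2 ≤ c).card
      ≤ (C.filter fun x => u * x.1 + v * x.2 < c).card + 2 :=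
    card_le_strict_add_two hP hC huv
  have sC2 : (C.filter fun x => -u * x.1 + -v * x.2 ≤ -c).card
      ≤ (C.filter fun x => -u * x.1 + -v * x.2 < -c).card + 2 :=
    card_le_strict_add_two hP hC huv'
  -- predicate conversions
  have eB2 : (B.filter fun x => -u * x.1 + -v * x.2 < -c).card
      = (B.filter fun x => c < u * x.1 + v * x.2).card :=
    filter_card_congr _ (fun x => by constructor <;> intro <;> linarith)
  have eC2 : (C.filter fun x => -u * x.1 + -v * x.2 < -c).card
      = (C.filter fun x => c < u * x.1 + v * x.2).card :=
    filter_card_congr _ (fun x => by constructor <;> intro <;> linarith)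
  have eCge : (C.filter fun x => c ≤ u * x.1 + v * x.2).card
      = (C.filter fun x => -u * x.1 + -v * x.2 ≤ -c).card :=
    filter_card_congr _ (fun x => by constructor <;> intro <;> linarith)
  have hcover := cover_card C u v c
  rcases le_or_gt C.card (2 * (C.filter fun x => c ≤ u * x.1 + v * x.2).card) with hside | hside
  · -- use (u, v, c)
    exact ⟨u, v, c, by omega, by omega, by omega⟩
  · -- the other side: use (-u, -v, -c)
    refine ⟨-u, -v, -c, ?_, ?_, ?_⟩
    · omega
    · have e : (B.filter fun x => -c < -u * x.1 + -v * x.2).card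
          = (B.filter fun x => u * x.1 + v * x.2 < c).card :=
        filter_card_congr _ (fun x => by constructor <;> intro <;> linarith)
      omega
    · have e : (C.filter fun x => -c < -u * x.1 + -v * x.2).card
          = (C.filter fun x => u * x.1 + v * x.2 < c).card :=
        filter_card_congr _ (fun x => by constructor <;> intro <;> linarith)
      omega

lemma iterate {P : Finset (ℝ × ℝ)} (hP : InGeneralPosition (P : Set (ℝ × ℝ))) {k : ℕ}
    (ts : List (Fin k × Fin k × Fin k)) :
    ∀ (Q : Fin k → Finset (ℝ × ℝ)), (∀ i, Q i ⊆ P) →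
      ∃ Q' : Fin k → Finset (ℝ × ℝ),
        (∀ m, Q' m ⊆ Q m) ∧
        (∀ t ∈ ts, t.1 ≠ t.2.1 → t.1 ≠ t.2.2 → LSep (Q' t.1) (Q' t.2.1 ∪ Q' t.2.2)) ∧
        (∀ m, (Q m).card + 3 ≤ 3 ^ ts.length * ((Q' m).card + 3)) := by
  classical
  induction ts with
  | nil =>
      intro Q hQ
      exact ⟨Q, fun m => subset_rfl, by simp, fun m => by simp⟩
  | cons t rest ih =>
      intro Q hQ
      obtain ⟨i, j, l⟩ := t
      by_cases hij : i ≠ j ∧ i ≠ l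
      · obtain ⟨u, v, c, hAc, hBc, hCc⟩ := step hP (hQ i) (hQ j) (hQ l)
        set Q₁ : Fin k → Finset (ℝ × ℝ) := fun m =>
          if m = i then (Q m).filter (fun x => u * x.1 + v * x.2 < c)
          else if m = j ∨ m = l then (Q m).filter (fun x => c < u * x.1 + v * x.2)
          else Q m with hQ₁
        have hsub : ∀ m, Q₁ m ⊆ Q m := by
          intro m
          rw [hQ₁]
          dsimp only
          split_ifs <;> first | exact Finset.filter_subset _ _ | exact subset_rfl
        have hcard : ∀ m, (Q m).card ≤ 3 * (Q₁ m).card + 6 := by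
          intro m
          rw [hQ₁]
          dsimp only
          by_cases h1 : m = i
          · subst h1; rw [if_pos rfl]; exact hAc
          · rw [if_neg h1]
            by_cases h2 : m = j ∨ m = l
            · rw [if_pos h2]
              rcases h2 with h2 | h2
              · subst h2; exact hBc
              · subst h2; exact hCc
            · rw [if_neg h2]; omega
        have hsep : LSep (Q₁ i) (Q₁ j ∪ Q₁ l) := by
          refine ⟨u, v, c, ?_, ?_⟩
          · intro x hx
            rw [hQ₁] at hx
            simp only [if_pos rfl] at hx
            exact (Finset.mem_filter.1 hx).2
          · intro x hx
            rcases Finset.mem_union.1 hx with hx | hx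
            · rw [hQ₁] at hx
              simp only at hx
              rw [if_neg (Ne.symm hij.1), if_pos (Or.inl trivial)] at hx
              exact (Finset.mem_filter.1 hx).2
            · rw [hQ₁] at hx
              simp only at hx
              rw [if_neg (Ne.symm hij.2), if_pos (Or.inr trivial)] at hx
              exact (Finset.mem_filter.1 hx).2
        obtain ⟨Q', hQ'sub, hQ'sep, hQ'card⟩ :=
          ih Q₁ (fun m => (hsub m).trans (hQ m))
        refine ⟨Q', fun m => (hQ'sub m).trans (hsub m), ?_, ?_⟩
        · intro t' ht' hne1 hne2
          rcases List.mem_cons.1 ht' with rfl | ht'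
          · exact sep_mono hsep (hQ'sub i)
              (Finset.union_subset_union (hQ'sub j) (hQ'sub l))
          · exact hQ'sep t' ht' hne1 hne2
        · intro m
          have h1 : (Q m).card + 3 ≤ 3 * ((Q₁ m).card + 3) := by
            have := hcard m; omega
          calc (Q m).card + 3 ≤ 3 * ((Q₁ m).card + 3) := h1
            _ ≤ 3 * (3 ^ rest.length * ((Q' m).card + 3)) :=
                Nat.mul_le_mul_left 3 (hQ'card m)
            _ = 3 ^ ((i, j, l) :: rest).length * ((Q' m).card + 3) := by
                simp [List.length_cons, pow_succ]; ring
      · obtain ⟨Q', hQ'sub, hQ'sep, hQ'card⟩ := ih Q hQ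
        refine ⟨Q', hQ'sub, ?_, ?_⟩
        · intro t' ht' hne1 hne2
          rcases List.mem_cons.1 ht' with rfl | ht'
          · exact absurd ⟨hne1, hne2⟩ hij
          · exact hQ'sep t' ht' hne1 hne2
        · intro m
          calc (Q m).card + 3 ≤ 3 ^ rest.length * ((Q' m).card + 3) := hQ'card m
            _ ≤ 3 ^ ((i, j, l) :: rest).length * ((Q' m).card + 3) := by
                apply Nat.mul_le_mul_right
                apply Nat.pow_le_pow_right <;> simp

noncomputable def detP (p q r : ℝ × ℝ) : ℝ :=
  (q.1 - p.1) * (r.2 - p.2) - (q.2 - p.2) * (r.1 - p.1)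

lemma mem_hull_union_left {B C : Finset (ℝ × ℝ)} {b : ℝ × ℝ}
    (h : b ∈ convexHull ℝ (B : Set (ℝ × ℝ))) :
    b ∈ convexHull ℝ ((B ∪ C : Finset (ℝ × ℝ)) : Set (ℝ × ℝ)) := by
  rw [Finset.coe_union]
  exact convexHull_mono Set.subset_union_left h

lemma mem_hull_union_right {B C : Finset (ℝ × ℝ)} {b : ℝ × ℝ}
    (h : b ∈ convexHull ℝ (C : Set (ℝ × ℝ))) :
    b ∈ convexHull ℝ ((B ∪ C : Finset (ℝ × ℝ)) : Set (ℝ × ℝ)) := by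
  rw [Finset.coe_union]
  exact convexHull_mono Set.subset_union_right h

lemma det_ne {A B C : Finset (ℝ × ℝ)}
    (h1 : LSep A (B ∪ C)) (h2 : LSep B (A ∪ C)) (h3 : LSep C (A ∪ B))
    {a b c : ℝ × ℝ} (ha : a ∈ convexHull ℝ (A : Set (ℝ × ℝ)))
    (hb : b ∈ convexHull ℝ (B : Set (ℝ × ℝ)))
    (hc : c ∈ convexHull ℝ (C : Set (ℝ × ℝ))) : detP a b c ≠ 0 := by
  intro h0
  unfold detP at h0
  obtain ⟨u1, v1, c1, hA1, hBC1⟩ := h1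
  obtain ⟨u2, v2, c2, hB2, hAC2⟩ := h2
  obtain ⟨u3, v3, c3, hC3, hAB3⟩ := h3
  have ha1 : u1 * a.1 + v1 * a.2 < c1 := hull_lt hA1 ha
  have hb1 : c1 < u1 * b.1 + v1 * b.2 := hull_gt hBC1 (mem_hull_union_left hb)
  have hc1 : c1 < u1 * c.1 + v1 * c.2 := hull_gt hBC1 (mem_hull_union_right hc)
  have hb2 : u2 * b.1 + v2 * b.2 < c2 := hull_lt hB2 hb
  have ha2 : c2 < u2 * a.1 + v2 * a.2 := hull_gt hAC2 (mem_hull_union_left ha)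
  have hc2 : c2 < u2 * c.1 + v2 * c.2 := hull_gt hAC2 (mem_hull_union_right hc)
  have hc3 : u3 * c.1 + v3 * c.2 < c3 := hull_lt hC3 hc
  have ha3 : c3 < u3 * a.1 + v3 * a.2 := hull_gt hAB3 (mem_hull_union_left ha)
  have hb3 : c3 < u3 * b.1 + v3 * b.2 := hull_gt hAB3 (mem_hull_union_right hb)
  have hab : a ≠ b := by
    intro h; rw [h] at ha1; linarith
  obtain ⟨t, ht1, ht2⟩ : ∃ t : ℝ, c.1 - a.1 = t * (b.1 - a.1) ∧ c.2 - a.2 = t * (b.2 - a.2) := by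
    by_cases hd1 : b.1 - a.1 = 0
    · have hd2 : b.2 - a.2 ≠ 0 := by
        intro hd2
        exact hab (Prod.ext (by linarith) (by linarith))
      refine ⟨(c.2 - a.2) / (b.2 - a.2), ?_, by field_simp⟩
      have : (b.2 - a.2) * (c.1 - a.1) = 0 := by
        rw [hd1] at h0; linarith
      have hc1a1 : c.1 - a.1 = 0 := by
        rcases mul_eq_zero.1 this with h | h
        · exact absurd h hd2
        · exact h
      rw [hc1a1, hd1]; ring
    · refine ⟨(c.1 - a.1) / (b.1 - a.1), by field_simp, ?_⟩
      field_simp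
      linear_combination h0
  have e1 : c.1 = a.1 + t * (b.1 - a.1) := by linarith
  have e2 : c.2 = a.2 + t * (b.2 - a.2) := by linarith
  rcases le_or_gt t 0 with hts | hts
  · -- a is inside conv(B ∪ C)
    have h1t : (0:ℝ) < 1 - t := by linarith
    have hcomb : (1 / (1 - t)) • c + (-t / (1 - t)) • b
        ∈ convexHull ℝ ((B ∪ C : Finset (ℝ × ℝ)) : Set (ℝ × ℝ)) := by
      apply convex_convexHull ℝ _ (mem_hull_union_right hc) (mem_hull_union_left hb)
      · positivity
      · apply div_nonneg (by linarith) (by linarith)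
      · field_simp
        ring
    have heq : (1 / (1 - t)) • c + (-t / (1 - t)) • b = a := by
      apply Prod.ext
      · show (1 / (1 - t)) * c.1 + (-t / (1 - t)) * b.1 = a.1
        rw [e1]; field_simp; ring
      · show (1 / (1 - t)) * c.2 + (-t / (1 - t)) * b.2 = a.2
        rw [e2]; field_simp; ring
    rw [heq] at hcomb
    have := hull_gt hBC1 hcomb
    rw [Set.mem_setOf_eq] at this
    linarith
  rcases le_or_gt t 1 with hts1 | hts1
  · -- c is inside conv(A ∪ B)
    have hcomb : (1 - t) • a + t • b
        ∈ convexHull ℝ ((A ∪ B : Finset (ℝ × ℝ)) : Set (ℝ × ℝ)) := by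
      apply convex_convexHull ℝ _ (mem_hull_union_left ha) (mem_hull_union_right hb)
        (by linarith) (by linarith) (by ring)
    have heq : (1 - t) • a + t • b = c := by
      apply Prod.ext
      · show (1 - t) * a.1 + t * b.1 = c.1
        rw [e1]; ring
      · show (1 - t) * a.2 + t * b.2 = c.2
        rw [e2]; ring
    rw [heq] at hcomb
    have := hull_gt hAB3 hcomb
    rw [Set.mem_setOf_eq] at this
    linarith
  · -- b is inside conv(A ∪ C)
    have ht0 : (0:ℝ) < t := by linarith
    have hcomb : (1 - 1 / t) • a + (1 / t) • c
        ∈ convexHull ℝ ((A ∪ C : Finset (ℝ × ℝ)) : Set (ℝ × ℝ)) := by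
      apply convex_convexHull ℝ _ (mem_hull_union_left ha) (mem_hull_union_right hc)
      · have : 1 / t ≤ 1 := by rw [div_le_one ht0]; linarith
        linarith
      · positivity
      · ring
    have heq : (1 - 1 / t) • a + (1 / t) • c = b := by
      apply Prod.ext
      · show (1 - 1 / t) * a.1 + (1 / t) * c.1 = b.1
        rw [e1]; field_simp; ring
      · show (1 - 1 / t) * a.2 + (1 / t) * c.2 = b.2
        rw [e2]; field_simp; ring
    rw [heq] at hcomb
    have := hull_gt hAC2 hcomb
    rw [Set.mem_setOf_eq] at this
    linarith

lemma orient_eq_sign (p q r : ℝ × ℝ) : orient p q r = Real.sign (detP p q r) := rfl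

lemma orient_const {A B C : Finset (ℝ × ℝ)}
    (h1 : LSep A (B ∪ C)) (h2 : LSep B (A ∪ C)) (h3 : LSep C (A ∪ B))
    {a b c a' b' c' : ℝ × ℝ}
    (ha : a ∈ convexHull ℝ (A : Set (ℝ × ℝ)))
    (hb : b ∈ convexHull ℝ (B : Set (ℝ × ℝ)))
    (hc : c ∈ convexHull ℝ (C : Set (ℝ × ℝ)))
    (ha' : a' ∈ convexHull ℝ (A : Set (ℝ × ℝ)))
    (hb' : b' ∈ convexHull ℝ (B : Set (ℝ × ℝ)))
    (hc' : c' ∈ convexHull ℝ (C : Set (ℝ × ℝ))) :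
    orient a b c = orient a' b' c' := by
  set T : Set ((ℝ × ℝ) × (ℝ × ℝ) × (ℝ × ℝ)) :=
    (convexHull ℝ (A : Set (ℝ × ℝ))) ×ˢ
      ((convexHull ℝ (B : Set (ℝ × ℝ))) ×ˢ (convexHull ℝ (C : Set (ℝ × ℝ)))) with hT
  have hconv : Convex ℝ T :=
    (convex_convexHull ℝ _).prod ((convex_convexHull ℝ _).prod (convex_convexHull ℝ _))
  have hf : Continuous (fun w : (ℝ × ℝ) × (ℝ × ℝ) × (ℝ × ℝ) => detP w.1 w.2.1 w.2.2) := by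
    unfold detP; fun_prop
  have hmem : (a, (b, c)) ∈ T := ⟨ha, hb, hc⟩
  have hmem' : (a', (b', c')) ∈ T := ⟨ha', hb', hc'⟩
  have key : ∀ x y : (ℝ × ℝ) × (ℝ × ℝ) × (ℝ × ℝ), x ∈ T → y ∈ T →
      detP x.1 x.2.1 x.2.2 < 0 → 0 < detP y.1 y.2.1 y.2.2 → False := by
    intro x y hx hy hxn hyp
    obtain ⟨z, hz, hz0⟩ := hconv.isPreconnected.intermediate_value₂ hx hy
      hf.continuousOn continuousOn_const (le_of_lt hxn) (le_of_lt hyp)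
    exact det_ne h1 h2 h3 hz.1 hz.2.1 hz.2.2 hz0
  have d1 : detP a b c ≠ 0 := det_ne h1 h2 h3 ha hb hc
  have d2 : detP a' b' c' ≠ 0 := det_ne h1 h2 h3 ha' hb' hc'
  rw [orient_eq_sign, orient_eq_sign]
  rcases lt_trichotomy (detP a b c) 0 with h | h | h
  · have h' : detP a' b' c' < 0 := by
      rcases lt_trichotomy (detP a' b' c') 0 with g | g | g
      · exact g
      · exact absurd g d2
      · exact (key _ _ hmem hmem' h g).elim
    rw [Real.sign_of_neg h, Real.sign_of_neg h']
  · exact absurd h d1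
  · have h' : 0 < detP a' b' c' := by
      rcases lt_trichotomy (detP a' b' c') 0 with g | g | g
      · exact (key _ _ hmem' hmem g h).elim
      · exact absurd g d2
      · exact g
    rw [Real.sign_of_pos h, Real.sign_of_pos h']

/-- For every `k ≥ 3` there is a constant `c(k) > 0` such that every finite point set `P` in
general position with `|P| ≥ k` contains `k` subsets `P 1, …, P k` with pairwise disjoint
convex hulls, all of the same size at least `c(k)·|P|`, having same-type transversals. -/
theorem same_type_disjoint_hulls :
    ∀ k : ℕ, 3 ≤ k → ∃ ck : ℝ, 0 < ck ∧
      ∀ P : Finset (ℝ × ℝ), InGeneralPosition (P : Set (ℝ × ℝ)) → k ≤ P.card →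
        ∃ Q : Fin k → Finset (ℝ × ℝ),
          (∀ i, Q i ⊆ P) ∧
          (∀ i j, i ≠ j →
            Disjoint (convexHull ℝ (Q i : Set (ℝ × ℝ))) (convexHull ℝ (Q j : Set (ℝ × ℝ)))) ∧
          (∀ i j, (Q i).card = (Q j).card) ∧
          (∀ i, ck * (P.card : ℝ) ≤ ((Q i).card : ℝ)) ∧
          SameTypeTransversals Q := by
  intro k hk
  classical
  set ts : List (Fin k × Fin k × Fin k) :=
    ((Finset.univ : Finset (Fin k × Fin k × Fin k)).filter
      (fun t => t.1 ≠ t.2.1 ∧ t.1 ≠ t.2.2)).toList with hts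
  set L : ℕ := ts.length with hL
  set n₀ : ℕ := 4 * 3 ^ (L + 1) with hn₀
  have hn₀pos : (0:ℝ) < (n₀ : ℝ) := by
    have : 0 < n₀ := by rw [hn₀]; positivity
    exact_mod_cast this
  refine ⟨1 / (n₀ : ℝ), by positivity, ?_⟩
  intro P hP hkP
  have hk0 : 0 < k := by omega
  have hne : Nonempty (Fin k) := ⟨⟨0, hk0⟩⟩
  by_cases hsmall : P.card < n₀
  · -- fallback: k distinct singletons
    obtain ⟨S, hSsub, hScard⟩ := Finset.exists_subset_card_eq hkP
    let e := (S.equivFinOfCardEq hScard).symm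
    refine ⟨fun i => {(e i : ℝ × ℝ)}, ?_, ?_, ?_, ?_, ?_⟩
    · intro i x hx
      rw [Finset.mem_singleton] at hx
      subst hx
      exact hSsub (e i).2
    · intro i j hij
      have hne' : ((e i : ℝ × ℝ)) ≠ (e j : ℝ × ℝ) := by
        intro h
        exact hij (e.injective (Subtype.ext h))
      simp only [Finset.coe_singleton, convexHull_singleton]
      exact Set.disjoint_singleton.2 hne'
    · intro i j; simp
    · intro i
      simp only [Finset.card_singleton, Nat.cast_one]
      have h1 : (P.card : ℝ) ≤ (n₀ : ℝ) := by exact_mod_cast le_of_lt hsmall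
      calc (1 / (n₀:ℝ)) * P.card ≤ (1 / (n₀:ℝ)) * n₀ := by
            apply mul_le_mul_of_nonneg_left h1
            positivity
        _ = 1 := by field_simp
    · intro f g hf hg i j l _ _
      have hfg : ∀ m, f m = g m := by
        intro m
        have h1 := hf m; have h2 := hg m
        rw [Finset.mem_singleton] at h1 h2
        rw [h1, h2]
      rw [hfg i, hfg j, hfg l]
  · -- main case
    push_neg at hsmall
    obtain ⟨Q', hsub, hsep, hcard⟩ := iterate hP ts (fun _ => P) (fun _ => subset_rfl)
    obtain ⟨i₀, _, hi₀⟩ := Finset.exists_mem_eq_inf' (Finset.univ_nonempty (α := Fin k))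
      (fun i => (Q' i).card)
    set s : ℕ := Finset.univ.inf' Finset.univ_nonempty (fun i : Fin k => (Q' i).card) with hsdef
    have hsle : ∀ i, s ≤ (Q' i).card := fun i => Finset.inf'_le _ (Finset.mem_univ i)
    choose Q'' hQ''sub hQ''card using fun i => Finset.exists_subset_card_eq (hsle i)
    have hmem_ts : ∀ (i j l : Fin k), i ≠ j → i ≠ l → ((i, j, l) ∈ ts) := by
      intro i j l h1 h2
      rw [hts, Finset.mem_toList, Finset.mem_filter]
      exact ⟨Finset.mem_univ _, h1, h2⟩
    have hsep' : ∀ (i j l : Fin k), i ≠ j → i ≠ l → LSep (Q'' i) (Q'' j ∪ Q'' l) := by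
      intro i j l h1 h2
      exact sep_mono (hsep (i, j, l) (hmem_ts i j l h1 h2) h1 h2) (hQ''sub i)
        (Finset.union_subset_union (hQ''sub j) (hQ''sub l))
    -- size bound
    have hx1 : 1 ≤ (Q' i₀).card := by
      by_contra hx
      push_neg at hx
      have h0 : (Q' i₀).card = 0 := by omega
      have hc := hcard i₀
      rw [← hL, h0] at hc
      rw [hn₀, pow_succ] at hsmall
      omega
    have hsize : (1 / (n₀:ℝ)) * P.card ≤ (s : ℝ) := by
      have hc := hcard i₀
      rw [← hL] at hc
      have c1 : ((P.card : ℝ) + 3) ≤ (3:ℝ) ^ L * (((Q' i₀).card : ℝ) + 3) := by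
        exact_mod_cast hc
      have c2 : (4 * (3:ℝ) ^ (L + 1)) ≤ (P.card : ℝ) := by
        have : (n₀ : ℝ) ≤ (P.card : ℝ) := by exact_mod_cast hsmall
        rw [hn₀] at this
        push_cast at this
        linarith
      have c3 : (1:ℝ) ≤ ((Q' i₀).card : ℝ) := by exact_mod_cast hx1
      have c4 : (0:ℝ) < (3:ℝ) ^ L := by positivity
      have hs_eq : (s : ℝ) = ((Q' i₀).card : ℝ) := by exact_mod_cast congrArg Nat.cast hi₀
      rw [hs_eq]
      rw [div_mul_eq_mul_div, div_le_iff₀ hn₀pos]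
      have hn₀val : (n₀ : ℝ) = 4 * (3:ℝ) ^ (L + 1) := by rw [hn₀]; push_cast; ring
      rw [hn₀val, pow_succ]
      nlinarith [c1, c2, c3, c4]
    refine ⟨Q'', ?_, ?_, ?_, ?_, ?_⟩
    · intro i
      exact (hQ''sub i).trans (hsub i)
    · intro i j hij
      have h := hsep' i j j hij hij
      rw [Finset.union_self] at h
      exact sep_disjoint h
    · intro i j
      rw [hQ''card i, hQ''card j]
    · intro i
      rw [hQ''card i]
      exact hsize
    · intro f g hf hg i j l hij hjl
      have hij' : i ≠ j := ne_of_lt hij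
      have hjl' : j ≠ l := ne_of_lt hjl
      have hil' : i ≠ l := ne_of_lt (hij.trans hjl)
      have h1 := hsep' i j l hij' hil'
      have h2 := hsep' j i l (Ne.symm hij') hjl'
      have h3 := hsep' l i j (Ne.symm hil') (Ne.symm hjl')
      exact orient_const h1 h2 h3
        (subset_convexHull ℝ _ (hf i)) (subset_convexHull ℝ _ (hf j))
        (subset_convexHull ℝ _ (hf l)) (subset_convexHull ℝ _ (hg i))
        (subset_convexHull ℝ _ (hg j)) (subset_convexHull ℝ _ (hg l))
end
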